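/- Let ω ∈ 𝕋. The complex dimension of the linear space {(u, v) : u an upper triangular p×p complex matrix, v an upper triangular q×q complex matrix, and the block-diagonal matrix diag(u,v) maps [ω] into [ω]} equals p(p+1)/2 + q(q+1)/2 − ( a⁺(ω) + a⁻(ω) + b(ω)(b(ω)+1)/2 + c(ω) ). -/

import Mathlib

open scoped Classical
open Matrix

noncomputable section

/-- A partial permutation matrix: entries in `{0,1}`, at most one `1` in each row
and in each column. -/
def IsPartialPerm {m n : ℕ} (τ : Matrix (Fin m) (Fin n) ℂ) : Prop :=
  (∀ i j, τ i j = 0 ∨ τ i j = 1) ∧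
  (∀ i j j', τ i j = 1 → τ i j' = 1 → j = j') ∧
  (∀ i i' j, τ i j = 1 → τ i' j = 1 → i = i')

/-- `(p+q) × r` complex matrices, rows indexed by `Fin p ⊕ Fin q`. -/
abbrev MatT (p q r : ℕ) := Matrix (Fin p ⊕ Fin q) (Fin r) ℂ

/-- The set `𝕋`: `(p+q) × r` matrices of rank `r` whose top `p × r` and bottom
`q × r` blocks are partial permutation matrices. -/
def InT {p q r : ℕ} (ω : MatT p q r) : Prop :=
  ω.rank = r ∧
  IsPartialPerm (Matrix.of fun (i : Fin p) (c : Fin r) => ω (Sum.inl i) c) ∧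
  IsPartialPerm (Matrix.of fun (j : Fin q) (c : Fin r) => ω (Sum.inr j) c)

/-- The permutation matrix of `w`: `(P_w)_{i,j} = 1` iff `i = w j`. -/
def permMat {r : ℕ} (w : Equiv.Perm (Fin r)) : Matrix (Fin r) (Fin r) ℂ :=
  Matrix.of fun i j => if i = w j then 1 else 0

/-- `[ω]`, the column space of `ω`, as a subspace of `ℂ^{p+q}`. -/
def colSpace {p q r : ℕ} (ω : MatT p q r) : Submodule ℂ (Fin p ⊕ Fin q → ℂ) :=
  LinearMap.range ω.mulVecLin

/-- `i ∈ I`: some column of `ω` has a `1` in row `i` (top block) and a `1` in some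
bottom row. -/
def memI {p q r : ℕ} (ω : MatT p q r) (i : Fin p) : Prop :=
  ∃ c, ω (Sum.inl i) c = 1 ∧ ∃ j : Fin q, ω (Sum.inr j) c = 1

/-- `i ∈ L`: some column of `ω` has a `1` in row `i` (top block) and no other
nonzero entry. -/
def memL {p q r : ℕ} (ω : MatT p q r) (i : Fin p) : Prop :=
  ∃ c, ω (Sum.inl i) c = 1 ∧ ∀ k, k ≠ Sum.inl i → ω k c = 0

/-- `i ∈ L'`: row `i` of the top block is zero. -/
def memL' {p q r : ℕ} (ω : MatT p q r) (i : Fin p) : Prop :=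
  ∀ c, ω (Sum.inl i) c = 0

/-- `j ∈ J`: some column of `ω` has a `1` in row `p+j` and a `1` in some top row. -/
def memJ {p q r : ℕ} (ω : MatT p q r) (j : Fin q) : Prop :=
  ∃ c, ω (Sum.inr j) c = 1 ∧ ∃ i : Fin p, ω (Sum.inl i) c = 1

/-- `j ∈ M`: some column of `ω` has a `1` in row `p+j` and no other nonzero entry. -/
def memM {p q r : ℕ} (ω : MatT p q r) (j : Fin q) : Prop :=
  ∃ c, ω (Sum.inr j) c = 1 ∧ ∀ k, k ≠ Sum.inr j → ω k c = 0

/-- `j ∈ M'`: row `p+j` of `ω` (i.e. row `j` of the bottom block) is zero. -/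
def memM' {p q r : ℕ} (ω : MatT p q r) (j : Fin q) : Prop :=
  ∀ c, ω (Sum.inr j) c = 0

/-- The degree of a positive vertex: `0` if free (`L'`), `1` if endpoint of an edge
(`I`), `2` if marked (`L`). -/
def degPlus {p q r : ℕ} (ω : MatT p q r) (i : Fin p) : ℕ :=
  if memL' ω i then 0 else if memI ω i then 1 else 2

/-- The degree of a negative vertex. -/
def degMinus {p q r : ℕ} (ω : MatT p q r) (j : Fin q) : ℕ :=
  if memM' ω j then 0 else if memJ ω j then 1 else 2

/-- `a⁺(ω)`. -/
def aPlus {p q r : ℕ} (ω : MatT p q r) : ℕ :=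
  Nat.card {x : Fin p × Fin p // x.1 < x.2 ∧ degPlus ω x.1 < degPlus ω x.2}

/-- `a⁻(ω)`. -/
def aMinus {p q r : ℕ} (ω : MatT p q r) : ℕ :=
  Nat.card {x : Fin q × Fin q // x.1 < x.2 ∧ degMinus ω x.1 < degMinus ω x.2}

/-- `b(ω) = |I|`. -/
def bNum {p q r : ℕ} (ω : MatT p q r) : ℕ :=
  Nat.card {i : Fin p // memI ω i}

/-- `c(ω)`: the number of inversions (crossings) of `σ`. -/
def cNum {p q r : ℕ} (ω : MatT p q r) (σ : Fin q → Fin p) : ℕ :=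
  Nat.card {x : Fin q × Fin q // memJ ω x.1 ∧ memJ ω x.2 ∧ x.1 < x.2 ∧ σ x.2 < σ x.1}

/-- Bundle of the combinatorial hypotheses we use. -/
structure Hyp {p q r : ℕ} (ω : MatT p q r) (σ : Fin q → Fin p) : Prop where
  hT : ∀ i c, ω (Sum.inl i) c = 0 ∨ ω (Sum.inl i) c = 1
  hTr : ∀ i c c', ω (Sum.inl i) c = 1 → ω (Sum.inl i) c' = 1 → c = c'
  hTc : ∀ i i' c, ω (Sum.inl i) c = 1 → ω (Sum.inl i') c = 1 → i = i'
  hB : ∀ j c, ω (Sum.inr j) c = 0 ∨ ω (Sum.inr j) c = 1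
  hBr : ∀ j c c', ω (Sum.inr j) c = 1 → ω (Sum.inr j) c' = 1 → c = c'
  hBc : ∀ j j' c, ω (Sum.inr j) c = 1 → ω (Sum.inr j') c = 1 → j = j'
  hs : ∀ j, memJ ω j → ∃ c, ω (Sum.inl (σ j)) c = 1 ∧ ω (Sum.inr j) c = 1

section Basic

variable {p q r : ℕ} {ω : MatT p q r} {σ : Fin q → Fin p}

lemma tri_top (H : Hyp ω σ) (i : Fin p) : memL' ω i ∨ memL ω i ∨ memI ω i := by
  by_cases h : ∀ c, ω (Sum.inl i) c = 0
  · exact Or.inl h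
  push_neg at h
  obtain ⟨c, hc⟩ := h
  have hc1 : ω (Sum.inl i) c = 1 := (H.hT i c).resolve_left hc
  by_cases hb : ∃ j, ω (Sum.inr j) c = 1
  · exact Or.inr (Or.inr ⟨c, hc1, hb⟩)
  · refine Or.inr (Or.inl ⟨c, hc1, ?_⟩)
    rintro (i' | j') hk
    · rcases H.hT i' c with h0 | h1
      · exact h0
      · exact absurd (congrArg Sum.inl (H.hTc i' i c h1 hc1)) hk
    · rcases H.hB j' c with h0 | h1
      · exact h0
      · exact absurd ⟨j', h1⟩ hb

lemma tri_bot (H : Hyp ω σ) (j : Fin q) : memM' ω j ∨ memM ω j ∨ memJ ω j := by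
  by_cases h : ∀ c, ω (Sum.inr j) c = 0
  · exact Or.inl h
  push_neg at h
  obtain ⟨c, hc⟩ := h
  have hc1 : ω (Sum.inr j) c = 1 := (H.hB j c).resolve_left hc
  by_cases hb : ∃ i, ω (Sum.inl i) c = 1
  · exact Or.inr (Or.inr ⟨c, hc1, hb⟩)
  · refine Or.inr (Or.inl ⟨c, hc1, ?_⟩)
    rintro (i' | j') hk
    · rcases H.hT i' c with h0 | h1
      · exact h0
      · exact absurd ⟨i', h1⟩ hb
    · rcases H.hB j' c with h0 | h1
      · exact h0
      · exact absurd (congrArg Sum.inr (H.hBc j' j c h1 hc1)) hk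

lemma L_not_L' {i : Fin p} (h : memL ω i) : ¬ memL' ω i := by
  obtain ⟨c, h1, -⟩ := h
  intro h'
  rw [h' c] at h1
  exact zero_ne_one h1

lemma I_not_L' {i : Fin p} (h : memI ω i) : ¬ memL' ω i := by
  obtain ⟨c, h1, -⟩ := h
  intro h'
  rw [h' c] at h1
  exact zero_ne_one h1

lemma I_not_L (H : Hyp ω σ) {i : Fin p} (h : memI ω i) : ¬ memL ω i := by
  obtain ⟨c, h1, j, h2⟩ := h
  rintro ⟨c', h1', hz⟩
  have hcc : c = c' := H.hTr i c c' h1 h1'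
  subst hcc
  rw [hz (Sum.inr j) (by simp)] at h2
  exact zero_ne_one h2

lemma M_not_M' {j : Fin q} (h : memM ω j) : ¬ memM' ω j := by
  obtain ⟨c, h1, -⟩ := h
  intro h'
  rw [h' c] at h1
  exact zero_ne_one h1

lemma J_not_M' {j : Fin q} (h : memJ ω j) : ¬ memM' ω j := by
  obtain ⟨c, h1, -⟩ := h
  intro h'
  rw [h' c] at h1
  exact zero_ne_one h1

lemma J_not_M (H : Hyp ω σ) {j : Fin q} (h : memJ ω j) : ¬ memM ω j := by
  obtain ⟨c, h1, i, h2⟩ := h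
  rintro ⟨c', h1', hz⟩
  have hcc : c = c' := H.hBr j c c' h1 h1'
  subst hcc
  rw [hz (Sum.inl i) (by simp)] at h2
  exact zero_ne_one h2

lemma sigma_eq (H : Hyp ω σ) {i : Fin p} {j : Fin q} {c : Fin r}
    (h1 : ω (Sum.inl i) c = 1) (h2 : ω (Sum.inr j) c = 1) : σ j = i := by
  have hJ : memJ ω j := ⟨c, h2, i, h1⟩
  obtain ⟨c', hs1, hs2⟩ := H.hs j hJ
  have hcc : c' = c := H.hBr j c' c hs2 h2
  subst hcc
  exact H.hTc (σ j) i c' hs1 h1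

lemma sigma_mem_I (H : Hyp ω σ) {j : Fin q} (hJ : memJ ω j) : memI ω (σ j) := by
  obtain ⟨c, h1, h2⟩ := H.hs j hJ
  exact ⟨c, h1, j, h2⟩

lemma sigma_inj (H : Hyp ω σ) {j j' : Fin q} (hj : memJ ω j) (hj' : memJ ω j')
    (h : σ j = σ j') : j = j' := by
  obtain ⟨c, h1, h2⟩ := H.hs j hj
  obtain ⟨c', h1', h2'⟩ := H.hs j' hj'
  rw [h] at h1
  have hcc : c = c' := H.hTr _ c c' h1 h1'
  subst hcc
  exact H.hBc j j' c h2 h2'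

lemma I_surj (H : Hyp ω σ) {i : Fin p} (hI : memI ω i) :
    ∃ j, memJ ω j ∧ σ j = i := by
  obtain ⟨c, h1, j, h2⟩ := hI
  exact ⟨j, ⟨c, h2, i, h1⟩, sigma_eq H h1 h2⟩

lemma rows_eq (H : Hyp ω σ) {j : Fin q} (hj : memJ ω j) (c : Fin r) :
    ω (Sum.inl (σ j)) c = ω (Sum.inr j) c := by
  obtain ⟨c0, h1, h2⟩ := H.hs j hj
  by_cases hc : c = c0
  · subst hc; rw [h1, h2]
  · have ht : ω (Sum.inl (σ j)) c = 0 := by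
      rcases H.hT (σ j) c with h | h
      · exact h
      · exact absurd (H.hTr _ _ _ h h1) hc
    have hb : ω (Sum.inr j) c = 0 := by
      rcases H.hB j c with h | h
      · exact h
      · exact absurd (H.hBr _ _ _ h h2) hc
    rw [ht, hb]

end Basic

section ColSpace

variable {p q r : ℕ} {ω : MatT p q r} {σ : Fin q → Fin p}

lemma mem_colSpace_iff (H : Hyp ω σ) (w : Fin p ⊕ Fin q → ℂ) :
    w ∈ colSpace ω ↔
      (∀ i, memL' ω i → w (Sum.inl i) = 0) ∧
      (∀ j, memM' ω j → w (Sum.inr j) = 0) ∧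
      (∀ j, memJ ω j → w (Sum.inl (σ j)) = w (Sum.inr j)) := by
  constructor
  · rintro ⟨x, rfl⟩
    refine ⟨?_, ?_, ?_⟩
    · intro i hi
      show ∑ c, ω (Sum.inl i) c * x c = 0
      exact Finset.sum_eq_zero fun c _ => by rw [hi c, zero_mul]
    · intro j hj
      show ∑ c, ω (Sum.inr j) c * x c = 0
      exact Finset.sum_eq_zero fun c _ => by rw [hj c, zero_mul]
    · intro j hj
      show ∑ c, ω (Sum.inl (σ j)) c * x c = ∑ c, ω (Sum.inr j) c * x c
      exact Finset.sum_congr rfl fun c _ => by rw [rows_eq H hj c]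
  · rintro ⟨hA, hB, hC⟩
    refine ⟨fun c =>
      if h : ∃ i, ω (Sum.inl i) c = 1 then w (Sum.inl h.choose)
      else if h2 : ∃ j, ω (Sum.inr j) c = 1 then w (Sum.inr h2.choose) else 0, ?_⟩
    funext k
    match k with
    | Sum.inl i =>
      show (∑ c, ω (Sum.inl i) c * _) = w (Sum.inl i)
      by_cases hi : memL' ω i
      · rw [hA i hi]
        exact Finset.sum_eq_zero fun c _ => by rw [hi c, zero_mul]
      · have : ∃ c, ω (Sum.inl i) c = 1 := by
          by_contra hcon
          push_neg at hcon
          exact hi fun c => (H.hT i c).resolve_right (hcon c)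
        obtain ⟨c0, hc0⟩ := this
        rw [Finset.sum_eq_single c0]
        · have hex : ∃ i', ω (Sum.inl i') c0 = 1 := ⟨i, hc0⟩
          have : hex.choose = i := H.hTc _ _ _ hex.choose_spec hc0
          rw [hc0, one_mul, dif_pos hex, this]
        · intro c _ hne
          rcases H.hT i c with h | h
          · rw [h, zero_mul]
          · exact absurd (H.hTr i c c0 h hc0) hne
        · intro h; exact absurd (Finset.mem_univ c0) h
    | Sum.inr j =>
      show (∑ c, ω (Sum.inr j) c * _) = w (Sum.inr j)
      by_cases hj : memM' ω j
      · rw [hB j hj]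
        exact Finset.sum_eq_zero fun c _ => by rw [hj c, zero_mul]
      · have : ∃ c, ω (Sum.inr j) c = 1 := by
          by_contra hcon
          push_neg at hcon
          exact hj fun c => (H.hB j c).resolve_right (hcon c)
        obtain ⟨c0, hc0⟩ := this
        rw [Finset.sum_eq_single c0]
        · rw [hc0, one_mul]
          by_cases hex : ∃ i', ω (Sum.inl i') c0 = 1
          · rw [dif_pos hex]
            have hJ : memJ ω j := ⟨c0, hc0, hex⟩
            have hσj : σ j = hex.choose := sigma_eq H hex.choose_spec hc0
            rw [← hσj]
            exact hC j hJ
          · rw [dif_neg hex]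
            have hex2 : ∃ j', ω (Sum.inr j') c0 = 1 := ⟨j, hc0⟩
            rw [dif_pos hex2]
            have : hex2.choose = j := H.hBc _ _ _ hex2.choose_spec hc0
            rw [this]
        · intro c _ hne
          rcases H.hB j c with h | h
          · rw [h, zero_mul]
          · exact absurd (H.hBr j c c0 h hc0) hne
        · intro h; exact absurd (Finset.mem_univ c0) h

lemma col_mem (c : Fin r) : (fun k => ω k c) ∈ colSpace ω := by
  refine ⟨Pi.single c 1, ?_⟩
  funext k
  simp [Matrix.mulVecLin_apply, Matrix.mulVec_single]

end ColSpace

section Stab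

variable {p q r : ℕ}

/-- The explicit linear conditions cutting out the stabilizer. -/
def SCond (ω : MatT p q r) (σ : Fin q → Fin p)
    (x : Matrix (Fin p) (Fin p) ℂ × Matrix (Fin q) (Fin q) ℂ) : Prop :=
  x.1.BlockTriangular id ∧ x.2.BlockTriangular id ∧
  (∀ i i', memL ω i → memL' ω i' → x.1 i' i = 0) ∧
  (∀ i j, memL ω i → memJ ω j → x.1 (σ j) i = 0) ∧
  (∀ j j', memM ω j → memM' ω j' → x.2 j' j = 0) ∧
  (∀ j j', memM ω j → memJ ω j' → x.2 j' j = 0) ∧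
  (∀ j i', memJ ω j → memL' ω i' → x.1 i' (σ j) = 0) ∧
  (∀ j j', memJ ω j → memM' ω j' → x.2 j' j = 0) ∧
  (∀ j j', memJ ω j → memJ ω j' → x.1 (σ j') (σ j) = x.2 j' j)

/-- The stabilizer as a submodule. -/
def Ssub (ω : MatT p q r) (σ : Fin q → Fin p) :
    Submodule ℂ (Matrix (Fin p) (Fin p) ℂ × Matrix (Fin q) (Fin q) ℂ) where
  carrier := {x | SCond ω σ x}
  add_mem' := by
    rintro a b ⟨a1, a2, a3, a4, a5, a6, a7, a8, a9⟩ ⟨b1, b2, b3, b4, b5, b6, b7, b8, b9⟩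
    refine ⟨a1.add b1, a2.add b2, ?_, ?_, ?_, ?_, ?_, ?_, ?_⟩ <;>
      intro z z' hz hz' <;>
      simp only [Prod.fst_add, Prod.snd_add, Matrix.add_apply]
    · rw [a3 z z' hz hz', b3 z z' hz hz', add_zero]
    · rw [a4 z z' hz hz', b4 z z' hz hz', add_zero]
    · rw [a5 z z' hz hz', b5 z z' hz hz', add_zero]
    · rw [a6 z z' hz hz', b6 z z' hz hz', add_zero]
    · rw [a7 z z' hz hz', b7 z z' hz hz', add_zero]
    · rw [a8 z z' hz hz', b8 z z' hz hz', add_zero]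
    · rw [a9 z z' hz hz', b9 z z' hz hz']
  zero_mem' := by
    refine ⟨Matrix.blockTriangular_zero, Matrix.blockTriangular_zero, ?_, ?_, ?_, ?_, ?_, ?_, ?_⟩ <;>
      intro z z' hz hz' <;> simp
  smul_mem' := by
    rintro t a ⟨a1, a2, a3, a4, a5, a6, a7, a8, a9⟩
    have s1 : (t • a).1.BlockTriangular id := fun i j h => by
      rw [Prod.smul_fst, Matrix.smul_apply, a1 h, smul_zero]
    have s2 : (t • a).2.BlockTriangular id := fun i j h => by
      rw [Prod.smul_snd, Matrix.smul_apply, a2 h, smul_zero]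
    refine ⟨s1, s2, ?_, ?_, ?_, ?_, ?_, ?_, ?_⟩ <;>
      intro z z' hz hz' <;>
      simp only [Prod.smul_fst, Prod.smul_snd, Matrix.smul_apply, smul_eq_mul]
    · rw [a3 z z' hz hz', mul_zero]
    · rw [a4 z z' hz hz', mul_zero]
    · rw [a5 z z' hz hz', mul_zero]
    · rw [a6 z z' hz hz', mul_zero]
    · rw [a7 z z' hz hz', mul_zero]
    · rw [a8 z z' hz hz', mul_zero]
    · rw [a9 z z' hz hz']

variable {ω : MatT p q r} {σ : Fin q → Fin p}

lemma gmul_inl (u : Matrix (Fin p) (Fin p) ℂ) (v : Matrix (Fin q) (Fin q) ℂ)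
    (w : Fin p ⊕ Fin q → ℂ) (i' : Fin p) :
    (Matrix.fromBlocks u 0 0 v).mulVec w (Sum.inl i') = ∑ i, u i' i * w (Sum.inl i) := by
  show (∑ k, Matrix.fromBlocks u 0 0 v (Sum.inl i') k * w k) = _
  rw [Fintype.sum_sum_type]
  simp [Matrix.fromBlocks]

lemma gmul_inr (u : Matrix (Fin p) (Fin p) ℂ) (v : Matrix (Fin q) (Fin q) ℂ)
    (w : Fin p ⊕ Fin q → ℂ) (j' : Fin q) :
    (Matrix.fromBlocks u 0 0 v).mulVec w (Sum.inr j') = ∑ j, v j' j * w (Sum.inr j) := by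
  show (∑ k, Matrix.fromBlocks u 0 0 v (Sum.inr j') k * w k) = _
  rw [Fintype.sum_sum_type]
  simp [Matrix.fromBlocks]

lemma set_eq (H : Hyp ω σ) :
    (Ssub ω σ : Set (Matrix (Fin p) (Fin p) ℂ × Matrix (Fin q) (Fin q) ℂ)) =
      {x | x.1.BlockTriangular id ∧ x.2.BlockTriangular id ∧
        ∀ v ∈ colSpace ω, (Matrix.fromBlocks x.1 0 0 x.2).mulVec v ∈ colSpace ω} := by
  ext x
  obtain ⟨u, v⟩ := x
  simp only [SetLike.mem_coe, Set.mem_setOf_eq]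
  constructor
  · rintro ⟨h1, h2, C4, C5, C6, C7, C8, C9, C2⟩
    refine ⟨h1, h2, ?_⟩
    have : colSpace ω ≤ Submodule.comap (Matrix.fromBlocks u 0 0 v).mulVecLin (colSpace ω) := by
      nth_rewrite 1 [colSpace]
      rw [Matrix.range_mulVecLin, Submodule.span_le]
      rintro - ⟨c, rfl⟩
      rw [SetLike.mem_coe, Submodule.mem_comap]
      show (Matrix.fromBlocks u 0 0 v).mulVecLin (fun k => ω k c) ∈ colSpace ω
      have hgl : ∀ i', (Matrix.fromBlocks u 0 0 v).mulVecLin (fun k => ω k c) (Sum.inl i')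
          = ∑ i, u i' i * ω (Sum.inl i) c := fun i' => gmul_inl u v _ i'
      have hgr : ∀ j', (Matrix.fromBlocks u 0 0 v).mulVecLin (fun k => ω k c) (Sum.inr j')
          = ∑ j, v j' j * ω (Sum.inr j) c := fun j' => gmul_inr u v _ j'
      rw [mem_colSpace_iff H]
      by_cases hTex : ∃ i, ω (Sum.inl i) c = 1
      · obtain ⟨i0, hi0⟩ := hTex
        have htop : ∀ i', (∑ i, u i' i * ω (Sum.inl i) c) = u i' i0 := by
          intro i'
          rw [Finset.sum_eq_single i0]
          · rw [hi0, mul_one]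
          · intro i _ hne
            rcases H.hT i c with h | h
            · rw [h, mul_zero]
            · exact absurd (H.hTc i i0 c h hi0) hne
          · intro h; exact absurd (Finset.mem_univ i0) h
        by_cases hBex : ∃ j, ω (Sum.inr j) c = 1
        · obtain ⟨j0, hj0⟩ := hBex
          have hbot : ∀ j', (∑ j, v j' j * ω (Sum.inr j) c) = v j' j0 := by
            intro j'
            rw [Finset.sum_eq_single j0]
            · rw [hj0, mul_one]
            · intro j _ hne
              rcases H.hB j c with h | h
              · rw [h, mul_zero]
              · exact absurd (H.hBc j j0 c h hj0) hne
            · intro h; exact absurd (Finset.mem_univ j0) h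
          have hJ0 : memJ ω j0 := ⟨c, hj0, i0, hi0⟩
          have hσ0 : σ j0 = i0 := sigma_eq H hi0 hj0
          refine ⟨?_, ?_, ?_⟩
          · intro i' hi'
            rw [hgl, htop, ← hσ0]
            exact C8 j0 i' hJ0 hi'
          · intro j' hj'
            rw [hgr, hbot]
            exact C9 j0 j' hJ0 hj'
          · intro j' hj'
            rw [hgl, hgr, htop, hbot, ← hσ0]
            exact C2 j0 j' hJ0 hj'
        · -- column is e_{i0} alone : i0 ∈ L
          have hzero : ∀ j, ω (Sum.inr j) c = 0 := by
            intro j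
            rcases H.hB j c with h | h
            · exact h
            · exact absurd ⟨j, h⟩ hBex
          have hL0 : memL ω i0 := by
            refine ⟨c, hi0, ?_⟩
            rintro (i' | j') hk
            · rcases H.hT i' c with h | h
              · exact h
              · exact absurd (congrArg Sum.inl (H.hTc i' i0 c h hi0)) hk
            · exact hzero j'
          have hbot0 : ∀ j', (∑ j, v j' j * ω (Sum.inr j) c) = 0 :=
            fun j' => Finset.sum_eq_zero fun j _ => by rw [hzero j, mul_zero]
          refine ⟨?_, ?_, ?_⟩
          · intro i' hi'
            rw [hgl, htop]
            exact C4 i0 i' hL0 hi'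
          · intro j' _
            rw [hgr, hbot0]
          · intro j' hj'
            rw [hgl, hgr, htop, hbot0]
            exact C5 i0 j' hL0 hj'
      · have hzt : ∀ i, ω (Sum.inl i) c = 0 := by
          intro i
          rcases H.hT i c with h | h
          · exact h
          · exact absurd ⟨i, h⟩ hTex
        have htop0 : ∀ i', (∑ i, u i' i * ω (Sum.inl i) c) = 0 :=
          fun i' => Finset.sum_eq_zero fun i _ => by rw [hzt i, mul_zero]
        by_cases hBex : ∃ j, ω (Sum.inr j) c = 1
        · obtain ⟨j0, hj0⟩ := hBex
          have hbot : ∀ j', (∑ j, v j' j * ω (Sum.inr j) c) = v j' j0 := by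
            intro j'
            rw [Finset.sum_eq_single j0]
            · rw [hj0, mul_one]
            · intro j _ hne
              rcases H.hB j c with h | h
              · rw [h, mul_zero]
              · exact absurd (H.hBc j j0 c h hj0) hne
            · intro h; exact absurd (Finset.mem_univ j0) h
          have hM0 : memM ω j0 := by
            refine ⟨c, hj0, ?_⟩
            rintro (i' | j') hk
            · exact hzt i'
            · rcases H.hB j' c with h | h
              · exact h
              · exact absurd (congrArg Sum.inr (H.hBc j' j0 c h hj0)) hk
          refine ⟨?_, ?_, ?_⟩
          · intro i' _
            rw [hgl, htop0]
          · intro j' hj'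
            rw [hgr, hbot]
            exact C6 j0 j' hM0 hj'
          · intro j' hj'
            rw [hgl, hgr, htop0, hbot]
            exact (C7 j0 j' hM0 hj').symm
        · have hzb : ∀ j, ω (Sum.inr j) c = 0 := by
            intro j
            rcases H.hB j c with h | h
            · exact h
            · exact absurd ⟨j, h⟩ hBex
          have hbot0 : ∀ j', (∑ j, v j' j * ω (Sum.inr j) c) = 0 :=
            fun j' => Finset.sum_eq_zero fun j _ => by rw [hzb j, mul_zero]
          refine ⟨?_, ?_, ?_⟩
          · intro i' _; rw [hgl, htop0]
          · intro j' _; rw [hgr, hbot0]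
          · intro j' _; rw [hgl, hgr, htop0, hbot0]
    intro w hw
    exact this hw
  · rintro ⟨h1, h2, hmap⟩
    refine ⟨h1, h2, ?_, ?_, ?_, ?_, ?_, ?_, ?_⟩
    · -- C2 : i ∈ L, i' ∈ L'
      intro i i' hi hi'
      obtain ⟨c, hc1, hz⟩ := hi
      have hK := (mem_colSpace_iff H _).mp (hmap _ (col_mem c))
      have := hK.1 i' hi'
      rw [gmul_inl] at this
      rw [Finset.sum_eq_single i] at this
      · rwa [hc1, mul_one] at this
      · intro b _ hne; rw [hz (Sum.inl b) (by simpa using hne), mul_zero]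
      · intro h; exact absurd (Finset.mem_univ i) h
    · -- C3 : i ∈ L, j ∈ J : u (σ j) i = 0
      intro i j hi hj
      obtain ⟨c, hc1, hz⟩ := hi
      have hK := (mem_colSpace_iff H _).mp (hmap _ (col_mem c))
      have := hK.2.2 j hj
      rw [gmul_inl, gmul_inr] at this
      rw [Finset.sum_eq_single i, Finset.sum_eq_zero] at this
      · rwa [hc1, mul_one] at this
      · intro b _; rw [hz (Sum.inr b) (by simp), mul_zero]
      · intro b _ hne; rw [hz (Sum.inl b) (by simpa using hne), mul_zero]
      · intro h; exact absurd (Finset.mem_univ i) h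
    · -- C4 : j ∈ M, j' ∈ M'
      intro j j' hj hj'
      obtain ⟨c, hc1, hz⟩ := hj
      have hK := (mem_colSpace_iff H _).mp (hmap _ (col_mem c))
      have := hK.2.1 j' hj'
      rw [gmul_inr] at this
      rw [Finset.sum_eq_single j] at this
      · rwa [hc1, mul_one] at this
      · intro b _ hne; rw [hz (Sum.inr b) (by simpa using hne), mul_zero]
      · intro h; exact absurd (Finset.mem_univ j) h
    · -- C5 : j ∈ M, j' ∈ J : v j' j = 0
      intro j j' hj hj'
      obtain ⟨c, hc1, hz⟩ := hj
      have hK := (mem_colSpace_iff H _).mp (hmap _ (col_mem c))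
      have := hK.2.2 j' hj'
      rw [gmul_inl, gmul_inr] at this
      rw [Finset.sum_eq_single j, Finset.sum_eq_zero] at this
      · rw [hc1, mul_one] at this; exact this.symm
      · intro b _; rw [hz (Sum.inl b) (by simp), mul_zero]
      · intro b _ hne; rw [hz (Sum.inr b) (by simpa using hne), mul_zero]
      · intro h; exact absurd (Finset.mem_univ j) h
    · -- C6 : j ∈ J, i' ∈ L' : u i' (σ j) = 0
      intro j i' hj hi'
      obtain ⟨c, hc1, hc2⟩ := H.hs j hj
      have hK := (mem_colSpace_iff H _).mp (hmap _ (col_mem c))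
      have := hK.1 i' hi'
      rw [gmul_inl] at this
      rw [Finset.sum_eq_single (σ j)] at this
      · rwa [hc1, mul_one] at this
      · intro b _ hne
        rcases H.hT b c with h | h
        · rw [h, mul_zero]
        · exact absurd (H.hTc b (σ j) c h hc1) hne
      · intro h; exact absurd (Finset.mem_univ (σ j)) h
    · -- C7 : j ∈ J, j' ∈ M' : v j' j = 0
      intro j j' hj hj'
      obtain ⟨c, hc1, hc2⟩ := H.hs j hj
      have hK := (mem_colSpace_iff H _).mp (hmap _ (col_mem c))
      have := hK.2.1 j' hj'
      rw [gmul_inr] at this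
      rw [Finset.sum_eq_single j] at this
      · rwa [hc2, mul_one] at this
      · intro b _ hne
        rcases H.hB b c with h | h
        · rw [h, mul_zero]
        · exact absurd (H.hBc b j c h hc2) hne
      · intro h; exact absurd (Finset.mem_univ j) h
    · -- C8 : j, j' ∈ J : u (σ j') (σ j) = v j' j
      intro j j' hj hj'
      obtain ⟨c, hc1, hc2⟩ := H.hs j hj
      have hK := (mem_colSpace_iff H _).mp (hmap _ (col_mem c))
      have := hK.2.2 j' hj'
      rw [gmul_inl, gmul_inr] at this
      rw [Finset.sum_eq_single (σ j), Finset.sum_eq_single j] at this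
      · rwa [hc1, hc2, mul_one, mul_one] at this
      · intro b _ hne
        rcases H.hB b c with h | h
        · rw [h, mul_zero]
        · exact absurd (H.hBc b j c h hc2) hne
      · intro h; exact absurd (Finset.mem_univ j) h
      · intro b _ hne
        rcases H.hT b c with h | h
        · rw [h, mul_zero]
        · exact absurd (H.hTc b (σ j) c h hc1) hne
      · intro h; exact absurd (Finset.mem_univ (σ j)) h

end Stab

section Free

variable {p q r : ℕ}

def freeU (ω : MatT p q r) (x : Fin p × Fin p) : Prop :=
  x.1 ≤ x.2 ∧ (memL' ω x.2 ∨ (memL ω x.2 ∧ memL ω x.1) ∨ (memI ω x.2 ∧ memL ω x.1))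

def freeV (ω : MatT p q r) (σ : Fin q → Fin p) (x : Fin q × Fin q) : Prop :=
  x.1 ≤ x.2 ∧ (memM' ω x.2 ∨ (memM ω x.2 ∧ memM ω x.1) ∨
    (memJ ω x.2 ∧ (memM ω x.1 ∨ (memJ ω x.1 ∧ σ x.1 ≤ σ x.2))))

def coupled (ω : MatT p q r) (σ : Fin q → Fin p) (x : Fin p × Fin p) : Prop :=
  ∃ jj : Fin q × Fin q, memJ ω jj.1 ∧ memJ ω jj.2 ∧ σ jj.1 = x.2 ∧ σ jj.2 = x.1

variable {ω : MatT p q r} {σ : Fin q → Fin p}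

/-- nonfree `v`-entries of an element of the stabilizer vanish. -/
lemma S_entry_v (H : Hyp ω σ) {x : Matrix (Fin p) (Fin p) ℂ × Matrix (Fin q) (Fin q) ℂ}
    (hx : SCond ω σ x) (a b : Fin q) (hnf : ¬ freeV ω σ (a, b)) : x.2 a b = 0 := by
  obtain ⟨h1, h2, C4, C5, C6, C7, C8, C9, C2⟩ := hx
  by_cases hab : a ≤ b
  swap
  · exact h2 (by simpa using lt_of_not_ge hab)
  rcases tri_bot H b with hb | hb | hb
  · exact absurd ⟨hab, Or.inl hb⟩ hnf
  · rcases tri_bot H a with ha | ha | ha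
    · exact C6 b a hb ha
    · exact absurd ⟨hab, Or.inr (Or.inl ⟨hb, ha⟩)⟩ hnf
    · exact C7 b a hb ha
  · rcases tri_bot H a with ha | ha | ha
    · exact C9 b a hb ha
    · exact absurd ⟨hab, Or.inr (Or.inr ⟨hb, Or.inl ha⟩)⟩ hnf
    · have hσ : ¬ σ a ≤ σ b := by
        intro hle
        exact hnf ⟨hab, Or.inr (Or.inr ⟨hb, Or.inr ⟨ha, hle⟩⟩)⟩
      rw [← C2 b a hb ha]
      exact h1 (by simpa using lt_of_not_ge hσ)

/-- nonfree, noncoupled `u`-entries of an element of the stabilizer vanish. -/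
lemma S_entry_u (H : Hyp ω σ) {x : Matrix (Fin p) (Fin p) ℂ × Matrix (Fin q) (Fin q) ℂ}
    (hx : SCond ω σ x) (a b : Fin p) (hnf : ¬ freeU ω (a, b)) (hnc : ¬ coupled ω σ (a, b)) :
    x.1 a b = 0 := by
  obtain ⟨h1, h2, C4, C5, C6, C7, C8, C9, C2⟩ := hx
  by_cases hab : a ≤ b
  swap
  · exact h1 (by simpa using lt_of_not_ge hab)
  rcases tri_top H b with hb | hb | hb
  · exact absurd ⟨hab, Or.inl hb⟩ hnf
  · rcases tri_top H a with ha | ha | ha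
    · exact C4 b a hb ha
    · exact absurd ⟨hab, Or.inr (Or.inl ⟨hb, ha⟩)⟩ hnf
    · obtain ⟨j', hj', hσ'⟩ := I_surj H ha
      rw [← hσ']
      exact C5 b j' hb hj'
  · rcases tri_top H a with ha | ha | ha
    · obtain ⟨j, hj, hσ⟩ := I_surj H hb
      rw [← hσ]
      exact C8 j a hj ha
    · exact absurd ⟨hab, Or.inr (Or.inr ⟨hb, ha⟩)⟩ hnf
    · obtain ⟨j, hj, hσ⟩ := I_surj H hb
      obtain ⟨j', hj', hσ'⟩ := I_surj H ha
      exact absurd ⟨(j, j'), hj, hj', hσ, hσ'⟩ hnc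

def reconV (ω : MatT p q r) (σ : Fin q → Fin p) (g : {x : Fin q × Fin q // freeV ω σ x} → ℂ) :
    Matrix (Fin q) (Fin q) ℂ :=
  fun a b => if h : freeV ω σ (a, b) then g ⟨(a, b), h⟩ else 0

def reconU (ω : MatT p q r) (σ : Fin q → Fin p) (f : {x : Fin p × Fin p // freeU ω x} → ℂ)
    (vm : Matrix (Fin q) (Fin q) ℂ) : Matrix (Fin p) (Fin p) ℂ :=
  fun a b => if h : freeU ω (a, b) then f ⟨(a, b), h⟩
    else if h2 : coupled ω σ (a, b) then vm h2.choose.2 h2.choose.1 else 0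

lemma reconV_not_free (g : {x : Fin q × Fin q // freeV ω σ x} → ℂ) {a b : Fin q}
    (h : ¬ freeV ω σ (a, b)) : reconV ω σ g a b = 0 := dif_neg h

lemma recon_mem (H : Hyp ω σ) (f : {x : Fin p × Fin p // freeU ω x} → ℂ)
    (g : {x : Fin q × Fin q // freeV ω σ x} → ℂ) :
    SCond ω σ (reconU ω σ f (reconV ω σ g), reconV ω σ g) := by
  set vm := reconV ω σ g with hvm
  have hvBT : vm.BlockTriangular id := by
    intro a b hab
    refine reconV_not_free g ?_
    rintro ⟨hle, -⟩
    exact absurd hle (not_le.mpr hab)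
  -- value of vm on a coupled pair realizing a non-≤ relation is 0; general helper:
  have hvm_JJ : ∀ {j j' : Fin q}, memJ ω j → memJ ω j' → ¬ σ j' ≤ σ j → vm j' j = 0 := by
    intro j j' hj hj' hle
    refine reconV_not_free g ?_
    rintro ⟨-, hc | hc | hc⟩
    · exact J_not_M' hj hc
    · exact J_not_M H hj hc.1
    · rcases hc.2 with hm | hm
      · exact J_not_M H hj' hm
      · exact hle hm.2
  have hU_nonfree : ∀ {a b : Fin p}, ¬ freeU ω (a, b) →
      reconU ω σ f vm a b = if h2 : coupled ω σ (a, b) then vm h2.choose.2 h2.choose.1 else 0 :=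
    fun h => dif_neg h
  refine ⟨?_, hvBT, ?_, ?_, ?_, ?_, ?_, ?_, ?_⟩
  · -- BT for u
    intro a b hab
    have hab' : b < a := hab
    have hnf : ¬ freeU ω (a, b) := by
      rintro ⟨hle, -⟩; exact absurd hle (not_le.mpr hab')
    rw [show (reconU ω σ f vm, vm).1 = reconU ω σ f vm from rfl]
    rw [hU_nonfree hnf]
    split_ifs with h2
    · obtain ⟨hj1, hj2, hσ1, hσ2⟩ := h2.choose_spec
      refine hvm_JJ hj1 hj2 ?_
      rw [hσ1, hσ2]
      exact not_le.mpr hab'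
    · rfl
  · -- C2 : i ∈ L, i' ∈ L'
    intro i i' hi hi'
    have hnf : ¬ freeU ω (i', i) := by
      rintro ⟨-, hc | hc | hc⟩
      · exact L_not_L' hi hc
      · exact L_not_L' hc.2 hi'
      · exact I_not_L H hc.1 hi
    rw [show (reconU ω σ f vm, vm).1 = reconU ω σ f vm from rfl, hU_nonfree hnf]
    rw [dif_neg]
    rintro ⟨jj, hj1, hj2, hσ1, hσ2⟩
    have hh := sigma_mem_I H hj1
    rw [hσ1] at hh
    exact I_not_L H hh hi
  · -- C3 : i ∈ L, j ∈ J : u (σ j) i = 0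
    intro i j hi hj
    have hIσ : memI ω (σ j) := sigma_mem_I H hj
    have hnf : ¬ freeU ω (σ j, i) := by
      rintro ⟨-, hc | hc | hc⟩
      · exact L_not_L' hi hc
      · exact I_not_L H hIσ hc.2
      · exact I_not_L H hc.1 hi
    rw [show (reconU ω σ f vm, vm).1 = reconU ω σ f vm from rfl, hU_nonfree hnf]
    rw [dif_neg]
    rintro ⟨jj, hj1, hj2, hσ1, hσ2⟩
    have hh := sigma_mem_I H hj1
    rw [hσ1] at hh
    exact I_not_L H hh hi
  · -- C4 : j ∈ M, j' ∈ M'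
    intro j j' hj hj'
    refine reconV_not_free g ?_
    rintro ⟨-, hc | hc | hc⟩
    · exact M_not_M' hj hc
    · exact M_not_M' hc.2 hj'
    · exact J_not_M H hc.1 hj
  · -- C5 : j ∈ M, j' ∈ J
    intro j j' hj hj'
    refine reconV_not_free g ?_
    rintro ⟨-, hc | hc | hc⟩
    · exact M_not_M' hj hc
    · exact J_not_M H hj' hc.2
    · exact J_not_M H hc.1 hj
  · -- C6 : j ∈ J, i' ∈ L' : u i' (σ j) = 0
    intro j i' hj hi'
    have hIσ : memI ω (σ j) := sigma_mem_I H hj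
    have hnf : ¬ freeU ω (i', σ j) := by
      rintro ⟨-, hc | hc | hc⟩
      · exact I_not_L' hIσ hc
      · exact I_not_L H hIσ hc.1
      · exact L_not_L' hc.2 hi'
    rw [show (reconU ω σ f vm, vm).1 = reconU ω σ f vm from rfl, hU_nonfree hnf]
    rw [dif_neg]
    rintro ⟨jj, hj1, hj2, hσ1, hσ2⟩
    have hh := sigma_mem_I H hj2
    rw [hσ2] at hh
    exact I_not_L' hh hi'
  · -- C7 : j ∈ J, j' ∈ M'
    intro j j' hj hj'
    refine reconV_not_free g ?_
    rintro ⟨-, hc | hc | hc⟩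
    · exact J_not_M' hj hc
    · exact J_not_M H hj hc.1
    · rcases hc.2 with hm | hm
      · exact M_not_M' hm hj'
      · exact J_not_M' hm.1 hj'
  · -- C8 : j, j' ∈ J : u (σ j') (σ j) = v j' j
    intro j j' hj hj'
    have hIj : memI ω (σ j) := sigma_mem_I H hj
    have hIj' : memI ω (σ j') := sigma_mem_I H hj'
    have hnf : ¬ freeU ω (σ j', σ j) := by
      rintro ⟨-, hc | hc | hc⟩
      · exact I_not_L' hIj hc
      · exact I_not_L H hIj hc.1
      · exact I_not_L H hIj' hc.2
    have hcp : coupled ω σ (σ j', σ j) := ⟨(j, j'), hj, hj', rfl, rfl⟩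
    rw [show (reconU ω σ f vm, vm).1 = reconU ω σ f vm from rfl,
      show (reconU ω σ f vm, vm).2 = vm from rfl, hU_nonfree hnf, dif_pos hcp]
    obtain ⟨hj1, hj2, hσ1, hσ2⟩ := hcp.choose_spec
    have e1 : hcp.choose.1 = j := sigma_inj H hj1 hj hσ1
    have e2 : hcp.choose.2 = j' := sigma_inj H hj2 hj' hσ2
    rw [e1, e2]

lemma reconV_recover (H : Hyp ω σ) {x : Matrix (Fin p) (Fin p) ℂ × Matrix (Fin q) (Fin q) ℂ}
    (hx : SCond ω σ x) :
    reconV ω σ (fun s => x.2 s.1.1 s.1.2) = x.2 := by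
  funext a b
  rw [reconV]
  split_ifs with h
  · rfl
  · exact (S_entry_v H hx a b h).symm

lemma reconU_recover (H : Hyp ω σ) {x : Matrix (Fin p) (Fin p) ℂ × Matrix (Fin q) (Fin q) ℂ}
    (hx : SCond ω σ x) :
    reconU ω σ (fun s => x.1 s.1.1 s.1.2) x.2 = x.1 := by
  funext a b
  rw [reconU]
  split_ifs with h h2
  · rfl
  · obtain ⟨hj1, hj2, hσ1, hσ2⟩ := h2.choose_spec
    have := hx.2.2.2.2.2.2.2.2 h2.choose.1 h2.choose.2 hj1 hj2
    rw [hσ1, hσ2] at this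
    exact this.symm
  · exact (S_entry_u H hx a b h h2).symm

/-- The restriction map as a linear map. -/
def Phi (ω : MatT p q r) (σ : Fin q → Fin p) :
    (Matrix (Fin p) (Fin p) ℂ × Matrix (Fin q) (Fin q) ℂ) →ₗ[ℂ]
      ({x : Fin p × Fin p // freeU ω x} → ℂ) × ({x : Fin q × Fin q // freeV ω σ x} → ℂ) where
  toFun x := (fun s => x.1 s.1.1 s.1.2, fun s => x.2 s.1.1 s.1.2)
  map_add' x y := rfl
  map_smul' t x := rfl

lemma finrank_Ssub (H : Hyp ω σ) :
    Module.finrank ℂ ↥(Ssub ω σ) =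
      (Finset.univ.filter (freeU ω)).card + (Finset.univ.filter (freeV ω σ)).card := by
  have hbij : Function.Bijective ((Phi ω σ).comp (Ssub ω σ).subtype) := by
    constructor
    · intro x y hxy
      have hx : SCond ω σ x.val := x.2
      have hy : SCond ω σ y.val := y.2
      have h1 : (Phi ω σ) x.val = (Phi ω σ) y.val := hxy
      have hfu : (fun s : {z : Fin p × Fin p // freeU ω z} => x.val.1 s.1.1 s.1.2)
          = fun s => y.val.1 s.1.1 s.1.2 := congrArg Prod.fst h1
      have hfv : (fun s : {z : Fin q × Fin q // freeV ω σ z} => x.val.2 s.1.1 s.1.2)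
          = fun s => y.val.2 s.1.1 s.1.2 := congrArg Prod.snd h1
      have h2 : x.val.2 = y.val.2 := by
        rw [← reconV_recover H hx, ← reconV_recover H hy, hfv]
      have h3 : x.val.1 = y.val.1 := by
        rw [← reconU_recover H hx, ← reconU_recover H hy, hfu, h2]
      exact Subtype.ext (Prod.ext h3 h2)
    · rintro ⟨f, g⟩
      refine ⟨⟨(reconU ω σ f (reconV ω σ g), reconV ω σ g), recon_mem H f g⟩, ?_⟩
      refine Prod.ext ?_ ?_
      · funext s
        show reconU ω σ f (reconV ω σ g) s.1.1 s.1.2 = f s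
        rw [reconU, dif_pos s.2]
      · funext s
        show reconV ω σ g s.1.1 s.1.2 = g s
        rw [reconV, dif_pos s.2]
  have e := LinearEquiv.ofBijective _ hbij
  rw [e.finrank_eq, Module.finrank_prod, Module.finrank_fintype_fun_eq_card,
    Module.finrank_fintype_fun_eq_card, Fintype.card_subtype, Fintype.card_subtype]

end Free

section Count

lemma tri_count {α : Type*} [LinearOrder α] [Fintype α] [DecidableEq α] (s : Finset α) :
    ((s ×ˢ s).filter fun x => x.1 ≤ x.2).card = s.card * (s.card + 1) / 2 := by
  classical
  have h1 : ((s ×ˢ s).filter fun x => x.1 ≤ x.2).card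
      + ((s ×ˢ s).filter fun x => ¬ x.1 ≤ x.2).card = (s ×ˢ s).card :=
    Finset.card_filter_add_card_filter_not _
  have h2 : ((s ×ˢ s).filter fun x => x.1 < x.2).card
      = ((s ×ˢ s).filter fun x => ¬ x.1 ≤ x.2).card := by
    apply Finset.card_nbij (fun x => (x.2, x.1))
    · intro a ha
      rw [Finset.mem_coe, Finset.mem_filter, Finset.mem_product] at ha ⊢
      exact ⟨⟨ha.1.2, ha.1.1⟩, not_le.mpr ha.2⟩
    · intro a _ b _ hab
      have h1 := congrArg Prod.fst hab
      have h2 := congrArg Prod.snd hab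
      exact Prod.ext h2 h1
    · intro b hb
      rw [Finset.coe_filter] at hb
      obtain ⟨hbm, hble⟩ := hb
      rw [Finset.mem_product] at hbm
      refine ⟨(b.2, b.1), ?_, rfl⟩
      rw [Finset.coe_filter]
      exact ⟨Finset.mem_product.mpr ⟨hbm.2, hbm.1⟩, not_le.mp hble⟩
  have h3 : ((s ×ˢ s).filter fun x => x.1 ≤ x.2).card
      = ((s ×ˢ s).filter fun x => x.1 < x.2).card
        + ((s ×ˢ s).filter fun x => x.1 = x.2).card := by
    rw [← Finset.card_union_of_disjoint]
    · congr 1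
      ext x
      simp only [Finset.mem_union, Finset.mem_filter]
      constructor
      · rintro ⟨hm, hle⟩
        rcases lt_or_eq_of_le hle with h | h
        · exact Or.inl ⟨hm, h⟩
        · exact Or.inr ⟨hm, h⟩
      · rintro (⟨hm, h⟩ | ⟨hm, h⟩)
        · exact ⟨hm, le_of_lt h⟩
        · exact ⟨hm, le_of_eq h⟩
    · rw [Finset.disjoint_left]
      rintro x hx hx'
      rw [Finset.mem_filter] at hx hx'
      exact absurd hx'.2 (ne_of_lt hx.2)
  have h4 : ((s ×ˢ s).filter fun x => x.1 = x.2).card = s.card := by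
    apply Finset.card_nbij (fun x => x.1)
    · intro a ha
      rw [Finset.mem_coe, Finset.mem_filter, Finset.mem_product] at ha
      exact ha.1.1
    · intro a ha b hb hab
      rw [Finset.coe_filter] at ha hb
      exact Prod.ext hab (ha.2 ▸ hb.2 ▸ hab)
    · intro a ha
      refine ⟨(a, a), ?_, rfl⟩
      rw [Finset.coe_filter]
      exact ⟨Finset.mem_product.mpr ⟨ha, ha⟩, rfl⟩
  have h5 : (s ×ˢ s).card = s.card * s.card := by
    rw [Finset.card_product]
  have h6 : s.card * (s.card + 1) = s.card * s.card + s.card := by ring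
  omega

variable {p q r : ℕ} {ω : MatT p q r} {σ : Fin q → Fin p}

lemma deg_L' {i : Fin p} (h : memL' ω i) : degPlus ω i = 0 := if_pos h

lemma deg_I {i : Fin p} (h : memI ω i) : degPlus ω i = 1 := by
  rw [degPlus, if_neg (fun h' => I_not_L' h h'), if_pos h]

lemma deg_L (H : Hyp ω σ) {i : Fin p} (h : memL ω i) : degPlus ω i = 2 := by
  rw [degPlus, if_neg (fun h' => L_not_L' h h'), if_neg (fun h' => I_not_L H h' h)]

lemma degm_M' {j : Fin q} (h : memM' ω j) : degMinus ω j = 0 := if_pos h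

lemma degm_J {j : Fin q} (h : memJ ω j) : degMinus ω j = 1 := by
  rw [degMinus, if_neg (fun h' => J_not_M' h h'), if_pos h]

lemma degm_M (H : Hyp ω σ) {j : Fin q} (h : memM ω j) : degMinus ω j = 2 := by
  rw [degMinus, if_neg (fun h' => M_not_M' h h'), if_neg (fun h' => J_not_M H h' h)]

lemma classifyU (H : Hyp ω σ) (a b : Fin p) :
    ¬ (memL' ω b ∨ (memL ω b ∧ memL ω a) ∨ (memI ω b ∧ memL ω a)) ↔
      (degPlus ω a < degPlus ω b ∨ (memI ω a ∧ memI ω b)) := by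
  rcases tri_top H b with hb | hb | hb <;> rcases tri_top H a with ha | ha | ha
  · -- case b:0 a:0
    have nbL : ¬ memL ω b := fun h => L_not_L' h hb
    have nbI : ¬ memI ω b := fun h => I_not_L' h hb
    have naL : ¬ memL ω a := fun h => L_not_L' h ha
    have naI : ¬ memI ω a := fun h => I_not_L' h ha
    rw [deg_L' hb, deg_L' ha]
    norm_num [hb, ha, nbL, nbI, naL, naI, not_le]
    try tauto
  · -- case b:0 a:1
    have nbL : ¬ memL ω b := fun h => L_not_L' h hb
    have nbI : ¬ memI ω b := fun h => I_not_L' h hb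
    have naL' : ¬ memL' ω a := L_not_L' ha
    have naI : ¬ memI ω a := fun h => I_not_L H h ha
    rw [deg_L' hb, deg_L H ha]
    norm_num [hb, ha, nbL, nbI, naL', naI, not_le]
    try tauto
  · -- case b:0 a:2
    have nbL : ¬ memL ω b := fun h => L_not_L' h hb
    have nbI : ¬ memI ω b := fun h => I_not_L' h hb
    have naL' : ¬ memL' ω a := I_not_L' ha
    have naL : ¬ memL ω a := I_not_L H ha
    rw [deg_L' hb, deg_I ha]
    norm_num [hb, ha, nbL, nbI, naL', naL, not_le]
    try tauto
  · -- case b:1 a:0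
    have nbL' : ¬ memL' ω b := L_not_L' hb
    have nbI : ¬ memI ω b := fun h => I_not_L H h hb
    have naL : ¬ memL ω a := fun h => L_not_L' h ha
    have naI : ¬ memI ω a := fun h => I_not_L' h ha
    rw [deg_L H hb, deg_L' ha]
    norm_num [hb, ha, nbL', nbI, naL, naI, not_le]
    try tauto
  · -- case b:1 a:1
    have nbL' : ¬ memL' ω b := L_not_L' hb
    have nbI : ¬ memI ω b := fun h => I_not_L H h hb
    have naL' : ¬ memL' ω a := L_not_L' ha
    have naI : ¬ memI ω a := fun h => I_not_L H h ha
    rw [deg_L H hb, deg_L H ha]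
    norm_num [hb, ha, nbL', nbI, naL', naI, not_le]
    try tauto
  · -- case b:1 a:2
    have nbL' : ¬ memL' ω b := L_not_L' hb
    have nbI : ¬ memI ω b := fun h => I_not_L H h hb
    have naL' : ¬ memL' ω a := I_not_L' ha
    have naL : ¬ memL ω a := I_not_L H ha
    rw [deg_L H hb, deg_I ha]
    norm_num [hb, ha, nbL', nbI, naL', naL, not_le]
    try tauto
  · -- case b:2 a:0
    have nbL' : ¬ memL' ω b := I_not_L' hb
    have nbL : ¬ memL ω b := I_not_L H hb
    have naL : ¬ memL ω a := fun h => L_not_L' h ha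
    have naI : ¬ memI ω a := fun h => I_not_L' h ha
    rw [deg_I hb, deg_L' ha]
    norm_num [hb, ha, nbL', nbL, naL, naI, not_le]
    try tauto
  · -- case b:2 a:1
    have nbL' : ¬ memL' ω b := I_not_L' hb
    have nbL : ¬ memL ω b := I_not_L H hb
    have naL' : ¬ memL' ω a := L_not_L' ha
    have naI : ¬ memI ω a := fun h => I_not_L H h ha
    rw [deg_I hb, deg_L H ha]
    norm_num [hb, ha, nbL', nbL, naL', naI, not_le]
    try tauto
  · -- case b:2 a:2
    have nbL' : ¬ memL' ω b := I_not_L' hb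
    have nbL : ¬ memL ω b := I_not_L H hb
    have naL' : ¬ memL' ω a := I_not_L' ha
    have naL : ¬ memL ω a := I_not_L H ha
    rw [deg_I hb, deg_I ha]
    norm_num [hb, ha, nbL', nbL, naL', naL, not_le]
    try tauto

lemma classifyV (H : Hyp ω σ) (a b : Fin q) :
    ¬ (memM' ω b ∨ (memM ω b ∧ memM ω a) ∨
        (memJ ω b ∧ (memM ω a ∨ (memJ ω a ∧ σ a ≤ σ b)))) ↔
      (degMinus ω a < degMinus ω b ∨ (memJ ω a ∧ memJ ω b ∧ σ b < σ a)) := by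
  rcases tri_bot H b with hb | hb | hb <;> rcases tri_bot H a with ha | ha | ha
  · -- case b:0 a:0
    have nbM : ¬ memM ω b := fun h => M_not_M' h hb
    have nbJ : ¬ memJ ω b := fun h => J_not_M' h hb
    have naM : ¬ memM ω a := fun h => M_not_M' h ha
    have naJ : ¬ memJ ω a := fun h => J_not_M' h ha
    rw [degm_M' hb, degm_M' ha]
    norm_num [hb, ha, nbM, nbJ, naM, naJ, not_le]
    try tauto
  · -- case b:0 a:1
    have nbM : ¬ memM ω b := fun h => M_not_M' h hb
    have nbJ : ¬ memJ ω b := fun h => J_not_M' h hb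
    have naM' : ¬ memM' ω a := M_not_M' ha
    have naJ : ¬ memJ ω a := fun h => J_not_M H h ha
    rw [degm_M' hb, degm_M H ha]
    norm_num [hb, ha, nbM, nbJ, naM', naJ, not_le]
    try tauto
  · -- case b:0 a:2
    have nbM : ¬ memM ω b := fun h => M_not_M' h hb
    have nbJ : ¬ memJ ω b := fun h => J_not_M' h hb
    have naM' : ¬ memM' ω a := J_not_M' ha
    have naM : ¬ memM ω a := J_not_M H ha
    rw [degm_M' hb, degm_J ha]
    norm_num [hb, ha, nbM, nbJ, naM', naM, not_le]
    try tauto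
  · -- case b:1 a:0
    have nbM' : ¬ memM' ω b := M_not_M' hb
    have nbJ : ¬ memJ ω b := fun h => J_not_M H h hb
    have naM : ¬ memM ω a := fun h => M_not_M' h ha
    have naJ : ¬ memJ ω a := fun h => J_not_M' h ha
    rw [degm_M H hb, degm_M' ha]
    norm_num [hb, ha, nbM', nbJ, naM, naJ, not_le]
    try tauto
  · -- case b:1 a:1
    have nbM' : ¬ memM' ω b := M_not_M' hb
    have nbJ : ¬ memJ ω b := fun h => J_not_M H h hb
    have naM' : ¬ memM' ω a := M_not_M' ha
    have naJ : ¬ memJ ω a := fun h => J_not_M H h ha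
    rw [degm_M H hb, degm_M H ha]
    norm_num [hb, ha, nbM', nbJ, naM', naJ, not_le]
    try tauto
  · -- case b:1 a:2
    have nbM' : ¬ memM' ω b := M_not_M' hb
    have nbJ : ¬ memJ ω b := fun h => J_not_M H h hb
    have naM' : ¬ memM' ω a := J_not_M' ha
    have naM : ¬ memM ω a := J_not_M H ha
    rw [degm_M H hb, degm_J ha]
    norm_num [hb, ha, nbM', nbJ, naM', naM, not_le]
    try tauto
  · -- case b:2 a:0
    have nbM' : ¬ memM' ω b := J_not_M' hb
    have nbM : ¬ memM ω b := J_not_M H hb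
    have naM : ¬ memM ω a := fun h => M_not_M' h ha
    have naJ : ¬ memJ ω a := fun h => J_not_M' h ha
    rw [degm_J hb, degm_M' ha]
    norm_num [hb, ha, nbM', nbM, naM, naJ, not_le]
    try tauto
  · -- case b:2 a:1
    have nbM' : ¬ memM' ω b := J_not_M' hb
    have nbM : ¬ memM ω b := J_not_M H hb
    have naM' : ¬ memM' ω a := M_not_M' ha
    have naJ : ¬ memJ ω a := fun h => J_not_M H h ha
    rw [degm_J hb, degm_M H ha]
    norm_num [hb, ha, nbM', nbM, naM', naJ, not_le]
    try tauto
  · -- case b:2 a:2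
    have nbM' : ¬ memM' ω b := J_not_M' hb
    have nbM : ¬ memM ω b := J_not_M H hb
    have naM' : ¬ memM' ω a := J_not_M' ha
    have naM : ¬ memM ω a := J_not_M H ha
    rw [degm_J hb, degm_J ha]
    norm_num [hb, ha, nbM', nbM, naM', naM, not_le]
    try tauto

end Count

section Final

lemma nat_card_eq {α : Type*} [Fintype α] (P : α → Prop) :
    Nat.card {x // P x} = (Finset.univ.filter P).card := by
  classical
  rw [Nat.card_eq_fintype_card]
  convert Fintype.card_subtype P

variable {p q r : ℕ} {ω : MatT p q r} {σ : Fin q → Fin p}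

lemma countU (H : Hyp ω σ) :
    (Finset.univ.filter (freeU ω)).card + (aPlus ω + bNum ω * (bNum ω + 1) / 2)
      = p * (p + 1) / 2 := by
  classical
  set T : Finset (Fin p × Fin p) := Finset.univ.filter (fun x => x.1 ≤ x.2) with hT
  have hTcard : T.card = p * (p + 1) / 2 := by
    have h := tri_count (Finset.univ : Finset (Fin p))
    rwa [Finset.univ_product_univ, Finset.card_univ, Fintype.card_fin] at h
  set P : Fin p × Fin p → Prop := fun x =>
    memL' ω x.2 ∨ (memL ω x.2 ∧ memL ω x.1) ∨ (memI ω x.2 ∧ memL ω x.1) with hP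
  have hsplit : (T.filter P).card + (T.filter fun x => ¬ P x).card = T.card :=
    Finset.card_filter_add_card_filter_not _
  have h1 : T.filter P = Finset.univ.filter (freeU ω) := by
    ext x
    simp only [hT, hP, Finset.mem_filter, Finset.mem_univ, true_and, freeU, and_assoc]
  set FI : Finset (Fin p) := Finset.univ.filter (memI ω) with hFI
  set A : Finset (Fin p × Fin p) :=
    Finset.univ.filter (fun x => x.1 < x.2 ∧ degPlus ω x.1 < degPlus ω x.2) with hA
  set B : Finset (Fin p × Fin p) := (FI ×ˢ FI).filter (fun x => x.1 ≤ x.2) with hB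
  have h2 : T.filter (fun x => ¬ P x) = A ∪ B := by
    ext x
    simp only [hT, hP, hA, hB, hFI, Finset.mem_filter, Finset.mem_union, Finset.mem_univ,
      true_and, Finset.mem_product, Finset.filter_filter]
    constructor
    · rintro ⟨hle, hn⟩
      rcases (classifyU H x.1 x.2).mp hn with hd | hd
      · refine Or.inl ⟨lt_of_le_of_ne hle ?_, hd⟩
        intro he
        rw [he] at hd
        exact lt_irrefl _ hd
      · exact Or.inr ⟨⟨hd.1, hd.2⟩, hle⟩
    · rintro (⟨hlt, hd⟩ | ⟨⟨hI1, hI2⟩, hle⟩)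
      · exact ⟨le_of_lt hlt, (classifyU H x.1 x.2).mpr (Or.inl hd)⟩
      · exact ⟨hle, (classifyU H x.1 x.2).mpr (Or.inr ⟨hI1, hI2⟩)⟩
  have hdisj : Disjoint A B := by
    rw [Finset.disjoint_left]
    intro x hx hx'
    rw [hA, Finset.mem_filter] at hx
    rw [hB, Finset.mem_filter, Finset.mem_product, hFI, Finset.mem_filter,
      Finset.mem_filter] at hx'
    rw [deg_I hx'.1.1.2, deg_I hx'.1.2.2] at hx
    exact lt_irrefl _ hx.2.2
  have hAcard : A.card = aPlus ω := by
    rw [aPlus, nat_card_eq, hA]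
    try congr!
  have hBcard : B.card = bNum ω * (bNum ω + 1) / 2 := by
    rw [hB, tri_count FI]
    rw [bNum, nat_card_eq, hFI]
    try congr!
  rw [h1, h2, Finset.card_union_of_disjoint hdisj, hAcard, hBcard, hTcard] at hsplit
  exact hsplit

lemma countV (H : Hyp ω σ) :
    (Finset.univ.filter (freeV ω σ)).card + (aMinus ω + cNum ω σ)
      = q * (q + 1) / 2 := by
  classical
  set T : Finset (Fin q × Fin q) := Finset.univ.filter (fun x => x.1 ≤ x.2) with hT
  have hTcard : T.card = q * (q + 1) / 2 := by
    have h := tri_count (Finset.univ : Finset (Fin q))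
    rwa [Finset.univ_product_univ, Finset.card_univ, Fintype.card_fin] at h
  set P : Fin q × Fin q → Prop := fun x =>
    memM' ω x.2 ∨ (memM ω x.2 ∧ memM ω x.1) ∨
      (memJ ω x.2 ∧ (memM ω x.1 ∨ (memJ ω x.1 ∧ σ x.1 ≤ σ x.2))) with hP
  have hsplit : (T.filter P).card + (T.filter fun x => ¬ P x).card = T.card :=
    Finset.card_filter_add_card_filter_not _
  have h1 : T.filter P = Finset.univ.filter (freeV ω σ) := by
    ext x
    simp only [hT, hP, Finset.mem_filter, Finset.mem_univ, true_and, freeV, and_assoc]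
  set A : Finset (Fin q × Fin q) :=
    Finset.univ.filter (fun x => x.1 < x.2 ∧ degMinus ω x.1 < degMinus ω x.2) with hA
  set B : Finset (Fin q × Fin q) :=
    Finset.univ.filter (fun x => memJ ω x.1 ∧ memJ ω x.2 ∧ x.1 < x.2 ∧ σ x.2 < σ x.1) with hB
  have h2 : T.filter (fun x => ¬ P x) = A ∪ B := by
    ext x
    simp only [hT, hP, hA, hB, Finset.mem_filter, Finset.mem_union, Finset.mem_univ, true_and]
    constructor
    · rintro ⟨hle, hn⟩
      rcases (classifyV H x.1 x.2).mp hn with hd | hd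
      · refine Or.inl ⟨lt_of_le_of_ne hle ?_, hd⟩
        intro he
        rw [he] at hd
        exact lt_irrefl _ hd
      · refine Or.inr ⟨hd.1, hd.2.1, lt_of_le_of_ne hle ?_, hd.2.2⟩
        intro he
        rw [he] at hd
        exact lt_irrefl _ hd.2.2
    · rintro (⟨hlt, hd⟩ | ⟨hJ1, hJ2, hlt, hd⟩)
      · exact ⟨le_of_lt hlt, (classifyV H x.1 x.2).mpr (Or.inl hd)⟩
      · exact ⟨le_of_lt hlt, (classifyV H x.1 x.2).mpr (Or.inr ⟨hJ1, hJ2, hd⟩)⟩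
  have hdisj : Disjoint A B := by
    rw [Finset.disjoint_left]
    intro x hx hx'
    rw [hA, Finset.mem_filter] at hx
    rw [hB, Finset.mem_filter] at hx'
    rw [degm_J hx'.2.1, degm_J hx'.2.2.1] at hx
    exact lt_irrefl _ hx.2.2
  have hAcard : A.card = aMinus ω := by
    rw [aMinus, nat_card_eq, hA]
    try congr!
  have hBcard : B.card = cNum ω σ := by
    rw [cNum, nat_card_eq, hB]
    try congr!
  rw [h1, h2, Finset.card_union_of_disjoint hdisj, hAcard, hBcard, hTcard] at hsplit
  exact hsplit

end Final


/-- the dimension of the stabilizer of `[ω]` in the Borel Lie algebra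
`𝔟_K = 𝔟_p⁺ × 𝔟_q⁺`. -/
theorem dim_borel_stabilizer (p q r : ℕ) (hr : r ≤ p + q) (ω : MatT p q r)
    (hω : InT ω) (σ : Fin q → Fin p)
    (hσ : ∀ j, memJ ω j → ∃ c, ω (Sum.inl (σ j)) c = 1 ∧ ω (Sum.inr j) c = 1) :
    ∃ S : Submodule ℂ (Matrix (Fin p) (Fin p) ℂ × Matrix (Fin q) (Fin q) ℂ),
      (S : Set (Matrix (Fin p) (Fin p) ℂ × Matrix (Fin q) (Fin q) ℂ)) =
        {x | x.1.BlockTriangular id ∧ x.2.BlockTriangular id ∧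
          ∀ v ∈ colSpace ω, (Matrix.fromBlocks x.1 0 0 x.2).mulVec v ∈ colSpace ω} ∧
      Module.finrank ℂ ↥S =
        p * (p + 1) / 2 + q * (q + 1) / 2 -
          (aPlus ω + aMinus ω + bNum ω * (bNum ω + 1) / 2 + cNum ω σ) := by
  
  obtain ⟨-, h1, h2⟩ := hω
  have H : Hyp ω σ := ⟨h1.1, h1.2.1, h1.2.2, h2.1, h2.2.1, h2.2.2, hσ⟩
  refine ⟨Ssub ω σ, set_eq H, ?_⟩
  rw [finrank_Ssub H]
  have hU := countU H
  have hV := countV H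
  generalize hk : bNum ω * (bNum ω + 1) / 2 = k at hU ⊢
  omega
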